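/- Let F_n : ℂ×ℂ → ℂ be a sequence of functions, each holomorphic in both variables, converging uniformly on compact subsets of ℂ² minus the diagonal {(x,x) : x ∈ ℂ} to a function F. Then F extends by continuity to a holomorphic function on all of ℂ², and the convergence F_n → F holds uniformly on all compact subsets of ℂ². -/

import Mathlib

open Metric Filter Complex Set

/-- Cauchy estimate in two variables: if `h` is entire on `ℂ × ℂ` and bounded by `C` on the
closed ball of radius 1 around `z`, then `‖fderiv ℂ h z‖ ≤ 2 * C`. -/
lemma aux_fderiv_bound {h : ℂ × ℂ → ℂ} (hh : Differentiable ℂ h) (z : ℂ × ℂ) {C : ℝ}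
    (hC : ∀ w ∈ Metric.closedBall z 1, ‖h w‖ ≤ C) : ‖fderiv ℂ h z‖ ≤ 2 * C := by
  have hC0 : 0 ≤ C := le_trans (norm_nonneg _) (hC z (mem_closedBall_self zero_le_one))
  set L := fderiv ℂ h z with hLdef
  have hL : HasFDerivAt h L z := (hh z).hasFDerivAt
  -- partial derivative in the first variable
  have h1 : HasDerivAt (fun t => h (t, z.2)) (L (1, 0)) z.1 := by
    have hcomp : HasDerivAt (fun t : ℂ => (t, z.2)) ((1 : ℂ), (0 : ℂ)) z.1 :=
      (hasDerivAt_id z.1).prodMk (hasDerivAt_const z.1 z.2)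
    have := hL.comp_hasDerivAt (f := fun t : ℂ => (t, z.2)) z.1 (by simpa using hcomp)
    exact this
  have h2 : HasDerivAt (fun t => h (z.1, t)) (L (0, 1)) z.2 := by
    have hcomp : HasDerivAt (fun t : ℂ => (z.1, t)) ((0 : ℂ), (1 : ℂ)) z.2 :=
      (hasDerivAt_const z.2 z.1).prodMk (hasDerivAt_id z.2)
    have := hL.comp_hasDerivAt (f := fun t : ℂ => (z.1, t)) z.2 (by simpa using hcomp)
    exact this
  have e1 : ‖L (1, 0)‖ ≤ C := by
    have hd : DiffContOnCl ℂ (fun t => h (t, z.2)) (ball z.1 1) :=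
      ((hh.comp (differentiable_id.prodMk (differentiable_const _)))).diffContOnCl
    have hb : ∀ t ∈ sphere z.1 1, ‖h (t, z.2)‖ ≤ C := by
      intro t ht
      apply hC
      rw [Metric.mem_closedBall, Prod.dist_eq]
      simp [mem_sphere_iff_norm] at ht
      simp [dist_eq_norm, ht]
    have := Complex.norm_deriv_le_of_forall_mem_sphere_norm_le one_pos hd hb
    rwa [h1.deriv, div_one] at this
  have e2 : ‖L (0, 1)‖ ≤ C := by
    have hd : DiffContOnCl ℂ (fun t => h (z.1, t)) (ball z.2 1) :=
      ((hh.comp ((differentiable_const _).prodMk differentiable_id))).diffContOnCl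
    have hb : ∀ t ∈ sphere z.2 1, ‖h (z.1, t)‖ ≤ C := by
      intro t ht
      apply hC
      rw [Metric.mem_closedBall, Prod.dist_eq]
      simp [mem_sphere_iff_norm] at ht
      simp [dist_eq_norm, ht]
    have := Complex.norm_deriv_le_of_forall_mem_sphere_norm_le one_pos hd hb
    rwa [h2.deriv, div_one] at this
  refine L.opNorm_le_bound (by positivity) fun w => ?_
  have hw : L w = w.1 • L (1, 0) + w.2 • L (0, 1) := by
    have : w = w.1 • ((1 : ℂ), (0 : ℂ)) + w.2 • ((0 : ℂ), (1 : ℂ)) := by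
      simp [Prod.ext_iff]
    rw [this, map_add, map_smul, map_smul]
    simp
  calc ‖L w‖ = ‖w.1 • L (1, 0) + w.2 • L (0, 1)‖ := by rw [hw]
    _ ≤ ‖w.1 • L (1, 0)‖ + ‖w.2 • L (0, 1)‖ := norm_add_le _ _
    _ = ‖w.1‖ * ‖L (1, 0)‖ + ‖w.2‖ * ‖L (0, 1)‖ := by rw [norm_smul, norm_smul]
    _ ≤ ‖w‖ * C + ‖w‖ * C := by
        gcongr
        · exact norm_fst_le w
        · exact norm_snd_le w
    _ = 2 * C * ‖w‖ := by ring

/-- From uniform Cauchy-ness on compacts avoiding the diagonal, deduce it on all compacts,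
via the maximum modulus principle applied on circles `{(x, x + R e^{iθ})}`. -/
lemma aux_cauchy_all (F : ℕ → ℂ × ℂ → ℂ) (hF : ∀ m, Differentiable ℂ (F m))
    (hcau : ∀ K : Set (ℂ × ℂ), K ⊆ {z : ℂ × ℂ | z.1 ≠ z.2} → IsCompact K →
      UniformCauchySeqOn F Filter.atTop K)
    (K : Set (ℂ × ℂ)) (hK : IsCompact K) : UniformCauchySeqOn F Filter.atTop K := by
  obtain ⟨C, hC⟩ := hK.exists_bound_of_continuousOn
    (f := fun z : ℂ × ℂ => z.2 - z.1) (Continuous.continuousOn (by fun_prop))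
  set R : ℝ := max C 0 + 1 with hRdef
  have hR : 0 < R := by positivity
  have hRb : ∀ z ∈ K, ‖z.2 - z.1‖ ≤ R := fun z hz =>
    le_trans (hC z hz) (by simp [hRdef]; linarith [le_max_left C 0])
  set K' : Set (ℂ × ℂ) :=
    (fun p : (ℂ × ℂ) × ℂ => (p.1.1, p.1.1 + p.2)) '' (K ×ˢ Metric.sphere (0 : ℂ) R) with hK'def
  have hK'c : IsCompact K' := (hK.prod (isCompact_sphere 0 R)).image (by fun_prop)
  have hK'd : K' ⊆ {z : ℂ × ℂ | z.1 ≠ z.2} := by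
    rintro _ ⟨⟨⟨x, y⟩, w⟩, ⟨_, hw⟩, rfl⟩
    simp only [mem_sphere_iff_norm, sub_zero] at hw
    simp only [Set.mem_setOf_eq]
    intro hxy
    have : w = 0 := by
      have := hxy.symm
      simpa [eq_comm] using left_eq_add.mp this.symm
    simp [this] at hw
    linarith
  have hK'cau := hcau K' hK'd hK'c
  rw [Metric.uniformCauchySeqOn_iff] at hK'cau ⊢
  intro ε hε
  obtain ⟨N, hN⟩ := hK'cau (ε / 2) (by linarith)
  refine ⟨N, fun m hm n hn z hz => ?_⟩
  obtain ⟨x, y⟩ := z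
  have key : ‖F m (x, y) - F n (x, y)‖ ≤ ε / 2 := by
    have hd : DiffContOnCl ℂ (fun t => F m (x, t) - F n (x, t)) (ball x R) := by
      apply Differentiable.diffContOnCl
      exact ((hF m).comp ((differentiable_const _).prodMk differentiable_id)).sub
        ((hF n).comp ((differentiable_const _).prodMk differentiable_id))
    have hy : y ∈ closure (ball x R) := by
      rw [closure_ball x hR.ne']
      rw [Metric.mem_closedBall, dist_eq_norm]
      simpa using hRb (x, y) hz
    have hb : ∀ t ∈ frontier (ball x R), ‖F m (x, t) - F n (x, t)‖ ≤ ε / 2 := by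
      intro t ht
      rw [frontier_ball x hR.ne'] at ht
      have htK' : (x, t) ∈ K' := by
        refine ⟨((x, y), t - x), ⟨hz, ?_⟩, by simp⟩
        simpa [mem_sphere_iff_norm, ← dist_eq_norm] using ht
      have := hN m hm n hn (x, t) htK'
      rw [dist_eq_norm] at this
      exact this.le
    exact Complex.norm_le_of_forall_mem_frontier_norm_le isBounded_ball hd hb hy
  rw [dist_eq_norm]
  linarith

theorem holomorphic_extension_off_diagonal
    (F : ℕ → ℂ × ℂ → ℂ) (G : ℂ × ℂ → ℂ)
    (hF : ∀ m, Differentiable ℂ (F m))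
    (hconv : ∀ K : Set (ℂ × ℂ), K ⊆ {z : ℂ × ℂ | z.1 ≠ z.2} → IsCompact K →
      TendstoUniformlyOn F G Filter.atTop K) :
    ∃ G' : ℂ × ℂ → ℂ, Differentiable ℂ G' ∧
      (∀ z : ℂ × ℂ, z.1 ≠ z.2 → G' z = G z) ∧
      ∀ K : Set (ℂ × ℂ), IsCompact K → TendstoUniformlyOn F G' Filter.atTop K := by
  have hcauAll : ∀ K : Set (ℂ × ℂ), IsCompact K → UniformCauchySeqOn F Filter.atTop K :=
    aux_cauchy_all F hF (fun K h1 h2 => (hconv K h1 h2).uniformCauchySeqOn)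
  have hptC : ∀ z : ℂ × ℂ, CauchySeq (fun n => F n z) := fun z =>
    (hcauAll {z} isCompact_singleton).cauchySeq rfl
  set G' : ℂ × ℂ → ℂ := fun z => limUnder Filter.atTop (fun n => F n z) with hG'def
  have hpt : ∀ z : ℂ × ℂ, Filter.Tendsto (fun n => F n z) Filter.atTop (nhds (G' z)) :=
    fun z => (hptC z).tendsto_limUnder
  have huc : ∀ K : Set (ℂ × ℂ), IsCompact K → TendstoUniformlyOn F G' Filter.atTop K :=
    fun K hK => (hcauAll K hK).tendstoUniformlyOn_of_tendsto (fun z _ => hpt z)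
  refine ⟨G', ?_, ?_, huc⟩
  · -- differentiability via uniform convergence of derivatives
    intro c
    have hcc : UniformCauchySeqOn (fun n z => fderiv ℂ (F n) z) Filter.atTop
        (Metric.closedBall c 1) := by
      have h2 := hcauAll (Metric.closedBall c 2) (isCompact_closedBall c 2)
      rw [Metric.uniformCauchySeqOn_iff] at h2 ⊢
      intro ε hε
      obtain ⟨N, hN⟩ := h2 (ε / 4) (by linarith)
      refine ⟨N, fun m hm n hn z hz => ?_⟩
      have hdiff : Differentiable ℂ (fun w => F m w - F n w) := (hF m).sub (hF n)
      have hbound : ∀ w ∈ Metric.closedBall z 1, ‖F m w - F n w‖ ≤ ε / 4 := by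
        intro w hw
        have hw2 : w ∈ Metric.closedBall c 2 := by
          rw [Metric.mem_closedBall] at hw hz ⊢
          calc dist w c ≤ dist w z + dist z c := dist_triangle w z c
            _ ≤ 1 + 1 := by linarith
            _ ≤ 2 := by norm_num
        have := hN m hm n hn w hw2
        rw [dist_eq_norm] at this
        exact this.le
      have key := aux_fderiv_bound hdiff z hbound
      have hfd : fderiv ℂ (fun w => F m w - F n w) z = fderiv ℂ (F m) z - fderiv ℂ (F n) z :=
        fderiv_sub ((hF m) z) ((hF n) z)
      rw [hfd] at key
      rw [dist_eq_norm]
      calc ‖fderiv ℂ (F m) z - fderiv ℂ (F n) z‖ ≤ 2 * (ε / 4) := key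
        _ < ε := by linarith
    have hdc : ∀ z ∈ Metric.closedBall c 1, CauchySeq (fun n => fderiv ℂ (F n) z) :=
      fun z hz => hcc.cauchySeq hz
    set g' : ℂ × ℂ → (ℂ × ℂ →L[ℂ] ℂ) :=
      fun z => limUnder Filter.atTop (fun n => fderiv ℂ (F n) z) with hg'def
    have hdt : ∀ z ∈ Metric.closedBall c 1,
        Filter.Tendsto (fun n => fderiv ℂ (F n) z) Filter.atTop (nhds (g' z)) :=
      fun z hz => (hdc z hz).tendsto_limUnder
    have hducl : TendstoUniformlyOn (fun n z => fderiv ℂ (F n) z) g' Filter.atTop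
        (Metric.closedBall c 1) := hcc.tendstoUniformlyOn_of_tendsto hdt
    have hdu : TendstoUniformlyOn (fun n z => fderiv ℂ (F n) z) g' Filter.atTop
        (Metric.ball c 1) := hducl.mono ball_subset_closedBall
    have := hasFDerivAt_of_tendstoUniformlyOn isOpen_ball hdu
      (fun n z _ => ((hF n) z).hasFDerivAt) (fun z _ => hpt z) (mem_ball_self one_pos)
    exact this.differentiableAt
  · intro z hz
    have h1 : TendstoUniformlyOn F G Filter.atTop {z} :=
      hconv {z} (by simpa using hz) isCompact_singleton
    exact tendsto_nhds_unique (hpt z) (h1.tendsto_at rfl)
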